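/- Let P be a finite poset of height h with canonical antichain decomposition A_1, ..., A_h, let u_i, Σ_i be as in the chain-counting setup, let A'_{i+1} = {y ∈ A_{i+1} : u_{i+1}(y) ≥ 1} and B_{i+1} = {y ∈ A'_{i+1} : y has exactly one G_i-neighbor in A_i}. Then for every i ∈ [h−1], Σ_i ≥ Σ_{i+1} + Σ_{y ∈ A'_{i+1} \ B_{i+1}} u_{i+1}(y) ≥ Σ_{i+1} + |A'_{i+1}| − |B_{i+1}|. -/

import Mathlib

/-- `x` is in the `i`-th canonical level of the poset: the longest chain whose maximum
element is `x` has exactly `i` elements. -/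
def levelAt {P : Type*} [PartialOrder P] (i : ℕ) (x : P) : Prop :=
  (∃ c : Finset P, IsChain (· ≤ ·) (↑c : Set P) ∧ x ∈ c ∧ (∀ y ∈ c, y ≤ x) ∧ c.card = i) ∧
  ∀ c : Finset P, IsChain (· ≤ ·) (↑c : Set P) → x ∈ c → (∀ y ∈ c, y ≤ x) → c.card ≤ i

/-- `u_i(x)`: the number of chains with `h - i + 1` elements whose minimum element is `x`
(`h` being the height of the poset). -/
noncomputable def uCount {P : Type*} [PartialOrder P] (h i : ℕ) (x : P) : ℕ :=
  Set.ncard {c : Finset P | IsChain (· ≤ ·) (↑c : Set P) ∧ x ∈ c ∧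
    (∀ y ∈ c, x ≤ y) ∧ c.card = h - i + 1}

section aux
variable {P : Type*} [PartialOrder P]

lemma chain_min {c : Finset P} (hc : IsChain (· ≤ ·) (↑c : Set P)) (hne : c.Nonempty) :
    ∃ y ∈ c, ∀ z ∈ c, y ≤ z := by
  obtain ⟨m, hm, hmin'⟩ := Finset.exists_minimal hne
  have hmin : ∀ z ∈ c, ¬ z < m := fun z hz hlt => hlt.not_ge (hmin' hz hlt.le)
  refine ⟨m, hm, fun z hz => ?_⟩
  rcases eq_or_ne m z with rfl | hmz
  · exact le_rfl
  rcases hc (Finset.mem_coe.mpr hm) (Finset.mem_coe.mpr hz) hmz with h1 | h1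
  · exact h1
  · exact absurd (lt_of_le_of_ne h1 (Ne.symm hmz)) (hmin z hz)

lemma chain_max {c : Finset P} (hc : IsChain (· ≤ ·) (↑c : Set P)) (hne : c.Nonempty) :
    ∃ y ∈ c, ∀ z ∈ c, z ≤ y := by
  obtain ⟨m, hm, hmax'⟩ := Finset.exists_maximal hne
  have hmax : ∀ z ∈ c, ¬ m < z := fun z hz hlt => hlt.not_ge (hmax' hz hlt.le)
  refine ⟨m, hm, fun z hz => ?_⟩
  rcases eq_or_ne m z with rfl | hmz
  · exact le_rfl
  rcases hc (Finset.mem_coe.mpr hm) (Finset.mem_coe.mpr hz) hmz with h1 | h1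
  · exact absurd (lt_of_le_of_ne h1 hmz) (hmax z hz)
  · exact h1

lemma levelAt_unique {i j : ℕ} {x : P} (hx : levelAt i x) (hx' : levelAt j x) : i = j := by
  obtain ⟨c, hc, hxc, hcb, hcard⟩ := hx.1
  obtain ⟨d, hd, hxd, hdb, hdcard⟩ := hx'.1
  exact le_antisymm (hcard ▸ hx'.2 c hc hxc hcb) (hdcard ▸ hx.2 d hd hxd hdb)

/-- Below every element of level `i+1` there is an element of level `i`. -/
lemma exists_below {i : ℕ} (hi1 : 1 ≤ i) {y : P} (hy : levelAt (i+1) y) :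
    ∃ x, levelAt i x ∧ x < y := by
  classical
  obtain ⟨⟨c, hc, hyc, hcb, hcard⟩, hymax⟩ := hy
  set c' := c.erase y with hc'def
  have hc'card : c'.card = i := by
    simp [hc'def, Finset.card_erase_of_mem hyc, hcard]
  have hc'ne : c'.Nonempty := Finset.card_pos.mp (by omega)
  have hc'chain : IsChain (· ≤ ·) (↑c' : Set P) :=
    hc.mono (by simp [hc'def, Finset.erase_subset, Finset.coe_subset])
  obtain ⟨x, hxc', hxmax⟩ := chain_max hc'chain hc'ne
  have hxy : x < y :=
    lt_of_le_of_ne (hcb x (Finset.mem_of_mem_erase hxc')) (Finset.ne_of_mem_erase hxc')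
  refine ⟨x, ⟨⟨c', hc'chain, hxc', hxmax, hc'card⟩, ?_⟩, hxy⟩
  intro e he hxe heb
  have hyne : y ∉ e := fun hye => absurd (lt_of_le_of_lt (heb y hye) hxy) (lt_irrefl y)
  have hins : IsChain (· ≤ ·) (↑(insert y e) : Set P) := by
    rw [Finset.coe_insert]
    exact he.insert (fun b hb _ => Or.inr (le_trans (heb b hb) hxy.le))
  have hkey := hymax (insert y e) hins (Finset.mem_insert_self y e) (fun z hz => by
    rcases Finset.mem_insert.mp hz with rfl | hz
    · exact le_rfl
    · exact le_trans (heb z hz) hxy.le)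
  rw [Finset.card_insert_of_notMem hyne] at hkey
  omega
end aux

open Classical in
noncomputable def chainSet {P : Type*} [Fintype P] [PartialOrder P] (h j : ℕ) (z : P) :
    Finset (Finset P) :=
  Finset.univ.filter (fun c => IsChain (· ≤ ·) (↑c : Set P) ∧ z ∈ c ∧
    (∀ w ∈ c, z ≤ w) ∧ c.card = h - j + 1)

lemma mem_chainSet {P : Type*} [Fintype P] [PartialOrder P] {h j : ℕ} {z : P} {c : Finset P} :
    c ∈ chainSet h j z ↔ IsChain (· ≤ ·) (↑c : Set P) ∧ z ∈ c ∧
      (∀ w ∈ c, z ≤ w) ∧ c.card = h - j + 1 := by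
  simp [chainSet]

lemma uCount_eq_card {P : Type*} [Fintype P] [PartialOrder P] (h j : ℕ) (z : P) :
    uCount h j z = (chainSet h j z).card := by
  have hs : {c : Finset P | IsChain (· ≤ ·) (↑c : Set P) ∧ z ∈ c ∧
      (∀ w ∈ c, z ≤ w) ∧ c.card = h - j + 1} = ↑(chainSet h j z) := by
    ext c; simp [mem_chainSet]
  rw [uCount, hs, Set.ncard_coe_finset]

open Classical in
/-- Key recursion: `u_i(x) = ∑_{y ∈ A_{i+1}, x < y} u_{i+1}(y)`. -/
lemma uCount_level_sum {P : Type*} [Fintype P] [DecidableEq P] [PartialOrder P]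
    {h i : ℕ} (hht : ∀ c : Finset P, IsChain (· ≤ ·) (↑c : Set P) → c.card ≤ h)
    (hi1 : 1 ≤ i) (hih : i + 1 ≤ h) {x : P} (hx : levelAt i x) (A1 : Finset P)
    (hA1 : ∀ y, y ∈ A1 ↔ levelAt (i+1) y) :
    uCount h i x = ∑ y ∈ A1.filter (fun y => x < y), uCount h (i+1) y := by
  classical
  simp only [uCount_eq_card]
  have hxnotmem : ∀ {y : P} {c' : Finset P}, x < y → (∀ w ∈ c', y ≤ w) → x ∉ c' :=
    fun {y c'} hxy hmin hxc' => absurd (lt_of_lt_of_le hxy (hmin x hxc')) (lt_irrefl x)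
  -- main set equality
  have hset : chainSet h i x =
      (A1.filter (fun y => x < y)).biUnion
        (fun y => (chainSet h (i+1) y).image (insert x)) := by
    ext c
    simp only [Finset.mem_biUnion, Finset.mem_filter, Finset.mem_image]
    constructor
    · intro hc
      obtain ⟨hchain, hxc, hmin, hcard⟩ := mem_chainSet.mp hc
      set c' := c.erase x with hc'def
      have hc'card : c'.card = h - (i+1) + 1 := by
        rw [hc'def, Finset.card_erase_of_mem hxc, hcard]; omega
      have hc'ne : c'.Nonempty := Finset.card_pos.mp (by omega)
      have hc'chain : IsChain (· ≤ ·) (↑c' : Set P) :=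
        hchain.mono (by simp [hc'def, Finset.erase_subset, Finset.coe_subset])
      obtain ⟨y, hyc', hymin⟩ := chain_min hc'chain hc'ne
      have hxy : x < y :=
        lt_of_le_of_ne (hmin y (Finset.mem_of_mem_erase hyc'))
          (Ne.symm (Finset.ne_of_mem_erase hyc'))
      have hylev : levelAt (i+1) y := by
        constructor
        · obtain ⟨d, hd, hxd, hdb, hdcard⟩ := hx.1
          have hynd : y ∉ d := fun hyd => absurd (lt_of_le_of_lt (hdb y hyd) hxy) (lt_irrefl y)
          refine ⟨insert y d, ?_, Finset.mem_insert_self y d, fun z hz => ?_, ?_⟩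
          · rw [Finset.coe_insert]
            exact hd.insert (fun b hb _ => Or.inr (le_trans (hdb b hb) hxy.le))
          · rcases Finset.mem_insert.mp hz with rfl | hz
            · exact le_rfl
            · exact le_trans (hdb z hz) hxy.le
          · rw [Finset.card_insert_of_notMem hynd, hdcard]
        · intro e he hye heb
          have hunion : IsChain (· ≤ ·) (↑(e ∪ c') : Set P) := by
            intro a ha b hb hab
            simp only [Finset.coe_union, Set.mem_union, Finset.mem_coe] at ha hb
            rcases ha with ha | ha <;> rcases hb with hb | hb
            · exact he (Finset.mem_coe.mpr ha) (Finset.mem_coe.mpr hb) hab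
            · exact Or.inl (le_trans (heb a ha) (hymin b hb))
            · exact Or.inr (le_trans (heb b hb) (hymin a ha))
            · exact hc'chain (Finset.mem_coe.mpr ha) (Finset.mem_coe.mpr hb) hab
          have hinter : e ∩ c' = {y} := by
            ext z
            simp only [Finset.mem_inter, Finset.mem_singleton]
            constructor
            · rintro ⟨hz1, hz2⟩
              exact le_antisymm (heb z hz1) (hymin z hz2)
            · rintro rfl
              exact ⟨hye, hyc'⟩
          have hcu := Finset.card_union_add_card_inter e c'
          rw [hinter, Finset.card_singleton, hc'card] at hcu
          have := hht (e ∪ c') hunion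
          omega
      refine ⟨y, ⟨(hA1 y).mpr hylev, hxy⟩, c', mem_chainSet.mpr ⟨hc'chain, hyc', hymin, hc'card⟩, ?_⟩
      rw [hc'def, Finset.insert_erase hxc]
    · rintro ⟨y, ⟨hyA1, hxy⟩, c', hc', rfl⟩
      obtain ⟨hc'chain, hyc', hymin, hc'card⟩ := mem_chainSet.mp hc'
      have hxnc' : x ∉ c' := hxnotmem hxy hymin
      refine mem_chainSet.mpr ⟨?_, Finset.mem_insert_self x c', fun w hw => ?_, ?_⟩
      · rw [Finset.coe_insert]
        exact hc'chain.insert (fun b hb _ => Or.inl (le_trans hxy.le (hymin b hb)))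
      · rcases Finset.mem_insert.mp hw with rfl | hw
        · exact le_rfl
        · exact le_trans hxy.le (hymin w hw)
      · rw [Finset.card_insert_of_notMem hxnc', hc'card]; omega
  have hdisj : ∀ y1 ∈ A1.filter (fun y => x < y), ∀ y2 ∈ A1.filter (fun y => x < y),
      y1 ≠ y2 → Disjoint ((chainSet h (i+1) y1).image (insert x))
        ((chainSet h (i+1) y2).image (insert x)) := by
    intro y1 hy1 y2 hy2 hne
    obtain ⟨_, hxy1⟩ := Finset.mem_filter.mp hy1
    obtain ⟨_, hxy2⟩ := Finset.mem_filter.mp hy2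
    rw [Finset.disjoint_left]
    rintro c hc1 hc2
    obtain ⟨c1, hc1', rfl⟩ := Finset.mem_image.mp hc1
    obtain ⟨c2, hc2', heq⟩ := Finset.mem_image.mp hc2
    obtain ⟨_, hy1c, hmin1, _⟩ := mem_chainSet.mp hc1'
    obtain ⟨_, hy2c, hmin2, _⟩ := mem_chainSet.mp hc2'
    have hc12 : c1 = c2 := by
      have e1 : (insert x c1).erase x = c1 := Finset.erase_insert (hxnotmem hxy1 hmin1)
      have e2 : (insert x c2).erase x = c2 := Finset.erase_insert (hxnotmem hxy2 hmin2)
      rw [← e1, ← e2, heq]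
    apply hne
    exact le_antisymm (hmin1 y2 (hc12 ▸ hy2c)) (hmin2 y1 (hc12 ▸ hy1c))
  rw [hset, Finset.card_biUnion hdisj]
  refine Finset.sum_congr rfl (fun y hy => ?_)
  obtain ⟨_, hxy⟩ := Finset.mem_filter.mp hy
  refine Finset.card_image_of_injOn (fun c1 h1 c2 h2 he => ?_)
  obtain ⟨_, _, hmin1, _⟩ := mem_chainSet.mp h1
  obtain ⟨_, _, hmin2, _⟩ := mem_chainSet.mp h2
  have h1' : (insert x c1).erase x = c1 := Finset.erase_insert (hxnotmem hxy hmin1)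
  have h2' : (insert x c2).erase x = c2 := Finset.erase_insert (hxnotmem hxy hmin2)
  rw [← h1', ← h2', he]

/-- With `A'_{i+1} = {y ∈ A_{i+1} : u_{i+1}(y) ≥ 1}` and
`B_{i+1} = {y ∈ A'_{i+1}` with exactly one neighbor in `A_i}`, one has
`Σ_i ≥ Σ_{i+1} + Σ_{y ∈ A'_{i+1} \ B_{i+1}} u_{i+1}(y) ≥ Σ_{i+1} + |A'_{i+1}| − |B_{i+1}|`. -/
theorem stmt_13 {P : Type*} [Fintype P] [DecidableEq P] [PartialOrder P] (h i : ℕ)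
    (hh : (∃ c : Finset P, c.card = h ∧ IsChain (· ≤ ·) (↑c : Set P)) ∧
      ∀ c : Finset P, IsChain (· ≤ ·) (↑c : Set P) → c.card ≤ h)
    (A : ℕ → Finset P) (hA : ∀ j x, x ∈ A j ↔ levelAt j x)
    (hi : 1 ≤ i) (hih : i ≤ h - 1)
    (A' B : Finset P)
    (hA' : ∀ y, y ∈ A' ↔ y ∈ A (i + 1) ∧ 1 ≤ uCount h (i + 1) y)
    (hB : ∀ y, y ∈ B ↔ y ∈ A' ∧ ∃! x, x ∈ A i ∧ x ≤ y) :
    (∑ x ∈ A (i + 1), uCount h (i + 1) x) + ∑ y ∈ A' \ B, uCount h (i + 1) y ≤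
        ∑ x ∈ A i, uCount h i x ∧
      A'.card - B.card ≤ ∑ y ∈ A' \ B, uCount h (i + 1) y ∧
      (∑ x ∈ A (i + 1), uCount h (i + 1) x) + (A'.card - B.card) ≤
        ∑ x ∈ A i, uCount h i x := by
  classical
  have hih' : i + 1 ≤ h := by omega
  set u : P → ℕ := uCount h (i + 1) with hu
  have hkey : ∀ x ∈ A i, uCount h i x = ∑ y ∈ (A (i+1)).filter (fun y => x < y), u y :=
    fun x hxA => uCount_level_sum hh.2 hi hih' ((hA i x).mp hxA) (A (i+1)) (hA (i+1))
  have hswap : ∑ x ∈ A i, uCount h i x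
      = ∑ y ∈ A (i+1), ((A i).filter (fun x => x < y)).card * u y := by
    rw [Finset.sum_congr rfl hkey]
    simp_rw [Finset.sum_filter]
    rw [Finset.sum_comm]
    simp_rw [← Finset.sum_filter, Finset.sum_const, smul_eq_mul]
  have hterm : ∀ y ∈ A (i+1), u y + (if y ∈ A' \ B then u y else 0)
      ≤ ((A i).filter (fun x => x < y)).card * u y := by
    intro y hyA
    by_cases hu0 : u y = 0
    · have : y ∉ A' \ B := fun hc =>
        (by omega : ¬ (1 ≤ u y)) ((hA' y).mp (Finset.mem_sdiff.mp hc).1).2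
      simp [hu0, this]
    have huy : 1 ≤ u y := Nat.one_le_iff_ne_zero.mpr hu0
    have hyA' : y ∈ A' := (hA' y).mpr ⟨hyA, huy⟩
    obtain ⟨x0, hx0lev, hx0y⟩ := exists_below hi ((hA (i+1) y).mp hyA)
    have hx0A : x0 ∈ A i := (hA i x0).mpr hx0lev
    have hx0f : x0 ∈ (A i).filter (fun x => x < y) := Finset.mem_filter.mpr ⟨hx0A, hx0y⟩
    by_cases hyB : y ∈ B
    · have hnm : y ∉ A' \ B := fun hc => (Finset.mem_sdiff.mp hc).2 hyB
      rw [if_neg hnm]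
      have h1 : 1 ≤ ((A i).filter (fun x => x < y)).card :=
        Finset.card_pos.mpr ⟨x0, hx0f⟩
      calc u y + 0 = 1 * u y := by ring
        _ ≤ _ := Nat.mul_le_mul_right _ h1
    · have hmem : y ∈ A' \ B := Finset.mem_sdiff.mpr ⟨hyA', hyB⟩
      rw [if_pos hmem]
      have hnotu : ¬ ∃! x, x ∈ A i ∧ x ≤ y := fun hc => hyB ((hB y).mpr ⟨hyA', hc⟩)
      have hex : ∃ x1, (x1 ∈ A i ∧ x1 ≤ y) ∧ x1 ≠ x0 := by
        by_contra hcon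
        push_neg at hcon
        exact hnotu ⟨x0, ⟨hx0A, hx0y.le⟩, hcon⟩
      obtain ⟨x1, ⟨hx1A, hx1y⟩, hx1ne⟩ := hex
      have hx1lt : x1 < y := by
        refine lt_of_le_of_ne hx1y (fun hcon => ?_)
        subst hcon
        have := levelAt_unique ((hA i x1).mp hx1A) ((hA (i+1) x1).mp hyA)
        omega
      have h2 : 2 ≤ ((A i).filter (fun x => x < y)).card :=
        Finset.one_lt_card.mpr ⟨x1, Finset.mem_filter.mpr ⟨hx1A, hx1lt⟩, x0, hx0f, hx1ne⟩
      calc u y + u y = 2 * u y := by ring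
        _ ≤ _ := Nat.mul_le_mul_right _ h2
  have hsub : A' \ B ⊆ A (i+1) := fun y hy => ((hA' y).mp (Finset.mem_sdiff.mp hy).1).1
  have hsum1 : (∑ y ∈ A (i+1), u y) + ∑ y ∈ A' \ B, u y ≤ ∑ x ∈ A i, uCount h i x := by
    rw [hswap]
    have hrw : ∑ y ∈ A' \ B, u y = ∑ y ∈ A (i+1), if y ∈ A' \ B then u y else 0 := by
      rw [Finset.sum_ite_mem, Finset.inter_eq_right.mpr hsub]
    rw [hrw, ← Finset.sum_add_distrib]
    exact Finset.sum_le_sum hterm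
  have hBsub : B ⊆ A' := fun y hy => ((hB y).mp hy).1
  have hsum2 : A'.card - B.card ≤ ∑ y ∈ A' \ B, u y := by
    rw [← Finset.card_sdiff_of_subset hBsub]
    calc (A' \ B).card = ∑ _y ∈ A' \ B, 1 := by simp
      _ ≤ ∑ y ∈ A' \ B, u y := Finset.sum_le_sum (fun y hy =>
          ((hA' y).mp (Finset.mem_sdiff.mp hy).1).2)
  exact ⟨hsum1, hsum2, le_trans (Nat.add_le_add_left hsum2 _) hsum1⟩
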